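/- Let w ∈ W^J and suppose D ∈ H^{J,a,*} satisfies: (1) D = Σ_{y ∈ W^J, y ≥ w} r_y S_y^{J,a} with r_w = 1 and r_y ∈ ⊕_{i=0}^{ℓ(y)−ℓ(w)−1} R_i for all y ∈ W^J with y > w; and (2) conj(D) = q^{ℓ(w)} D. Then D = D_w^{J,a}, i.e., ⟨D, C_x^{J,a}⟩ = (−1)^{ℓ(w)} δ_{w,x} for all x ∈ W^J. -/

import Mathlib

namespace KLPaper

open Polynomial
open scoped Classical

variable {B : Type*} {W : Type*} [Group W] {M : CoxeterMatrix B}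

/-- The Bruhat order on a Coxeter group: generated by right multiplication by
reflections which increases the length. -/
def bruhatLE (cs : CoxeterSystem M W) : W → W → Prop :=
  Relation.ReflTransGen (fun x y =>
    (∃ t, cs.IsReflection t ∧ y = x * t) ∧ cs.length x < cs.length y)

/-- A commutative ring `R` containing `ℤ[q,q⁻¹]`, with a direct sum decomposition
`R = ⊕_{k ∈ ℤ} R_k` into additive subgroups and an involutive ring endomorphism `conj`
such that `R_i R_j ⊆ R_{i+j}`, `conj R_i = R_{-i}`, `1 ∈ R_0`, `q ∈ R_2`, `conj q = q⁻¹`. -/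
structure KLRing (R : Type*) [CommRing R] where
  q : R
  qinv : R
  q_qinv : q * qinv = 1
  grade : ℤ → AddSubgroup R
  decomp : DirectSum.IsInternal grade
  conj : R →+* R
  conj_conj : ∀ r : R, conj (conj r) = r
  grade_mul : ∀ (i j : ℤ) (r s : R), r ∈ grade i → s ∈ grade j → r * s ∈ grade (i + j)
  conj_grade : ∀ (i : ℤ) (r : R), r ∈ grade i → conj r ∈ grade (-i)
  one_mem : (1 : R) ∈ grade 0
  q_mem : q ∈ grade 2
  conj_q : conj q = qinv
  laurent_inj : Function.Injective fun f : ℤ →₀ ℤ =>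
    f.sum fun k c => c • (if 0 ≤ k then q ^ k.toNat else qinv ^ (-k).toNat)

variable {R : Type*} [CommRing R]

/-- The subgroup `R_0 + R_1 + ⋯ + R_{n-1} = ⊕_{i=0}^{n-1} R_i` of `R`. -/
def KLRing.gradeSum (K : KLRing R) (n : ℕ) : AddSubgroup R :=
  ⨆ i ∈ Finset.range n, K.grade (i : ℤ)

/-- `r` belongs to `ℤ[q] ⊆ R`. -/
def KLRing.InZq (K : KLRing R) (r : R) : Prop :=
  ∃ p : Polynomial ℤ, Polynomial.aeval K.q p = r

/-- The Hecke algebra of `(W, S)` over `R`: the free `R`-module with basis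
`{T_w}_{w ∈ W}`, with multiplication determined by `T_{w₁} T_{w₂} = T_{w₁ w₂}`
whenever `ℓ(w₁w₂) = ℓ(w₁) + ℓ(w₂)` and `(T_s + 1)(T_s - q) = 0` for `s ∈ S`. -/
structure Hecke (cs : CoxeterSystem M W) (R : Type*) [CommRing R] (q : R) where
  carrier : Type*
  [ring : Ring carrier]
  [alg : Algebra R carrier]
  T : W → carrier
  basis : Module.Basis W R carrier
  basis_eq : ∀ w : W, basis w = T w
  T_mul : ∀ w₁ w₂ : W, cs.length (w₁ * w₂) = cs.length w₁ + cs.length w₂ →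
    T w₁ * T w₂ = T (w₁ * w₂)
  T_quad : ∀ i : B, (T (cs.simple i) + 1) * (T (cs.simple i) - algebraMap R carrier q) = 0

attribute [instance] Hecke.ring Hecke.alg

variable {cs : CoxeterSystem M W}

/-- `bar` is the bar involution `Σ r_w T_w ↦ Σ conj(r_w) (T_{w⁻¹})⁻¹` of the Hecke algebra. -/
def IsBar (K : KLRing R) (Hk : Hecke cs R K.q) (bar : Hk.carrier →+* Hk.carrier) : Prop :=
  ∀ (r : R) (w : W), bar (r • Hk.T w) = K.conj r • Ring.inverse (Hk.T w⁻¹)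

/-- `j` is the involution `j(Σ r_w T_w) = Σ r_w (-q)^{ℓ(w)} (T_{w⁻¹})⁻¹` of the Hecke algebra. -/
def IsJ (K : KLRing R) (Hk : Hecke cs R K.q) (j : Hk.carrier →ₐ[R] Hk.carrier) : Prop :=
  ∀ w : W, j (Hk.T w) = (-K.q) ^ cs.length w • Ring.inverse (Hk.T w⁻¹)

/-- `C` is the Kazhdan–Lusztig basis element `C_w`:
`C = Σ_{y ≤ w} P_{y,w} T_y` with `P_{w,w} = 1`,
`P_{y,w} ∈ ⊕_{i=0}^{ℓ(w)-ℓ(y)-1} R_i` for `y < w`, and `bar C = q^{-ℓ(w)} C`.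
(The coefficient `P_{y,w}` of `C_w` is `Hk.basis.repr C y`.) -/
def IsKLElt (K : KLRing R) (Hk : Hecke cs R K.q)
    (bar : Hk.carrier →+* Hk.carrier) (w : W) (C : Hk.carrier) : Prop :=
  Hk.basis.repr C w = 1 ∧
  (∀ y : W, Hk.basis.repr C y ≠ 0 → bruhatLE cs y w) ∧
  (∀ y : W, bruhatLE cs y w → y ≠ w →
    Hk.basis.repr C y ∈ K.gradeSum (cs.length w - cs.length y)) ∧
  bar C = K.qinv ^ cs.length w • C

/-- The standard parabolic subgroup `W_J = ⟨J⟩`. -/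
def WJ (cs : CoxeterSystem M W) (J : Set B) : Subgroup W :=
  Subgroup.closure (cs.simple '' J)

/-- `W^J`: the set of minimal length coset representatives of `W/W_J`,
i.e. the `w ∈ W` with `ws > w` for all `s ∈ J`. -/
def minReps (cs : CoxeterSystem M W) (J : Set B) : Set W :=
  {w | ∀ i ∈ J, cs.length w < cs.length (w * cs.simple i)}

/-- The Hecke algebra `H(W_J)` of the standard parabolic subgroup `W_J`
(with generating set `J`; the length function of `(W_J, J)` is the restriction
of that of `(W, S)`). -/
structure HeckeJ (cs : CoxeterSystem M W) (J : Set B) (R : Type*) [CommRing R] (q : R) where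
  carrier : Type*
  [ring : Ring carrier]
  [alg : Algebra R carrier]
  T : WJ cs J → carrier
  basis : Module.Basis (WJ cs J) R carrier
  basis_eq : ∀ x, basis x = T x
  T_mul : ∀ x₁ x₂ : WJ cs J,
    cs.length ((x₁ : W) * (x₂ : W)) = cs.length (x₁ : W) + cs.length (x₂ : W) →
    T x₁ * T x₂ = T (x₁ * x₂)
  T_quad : ∀ (i : B) (hi : i ∈ J),
    (T ⟨cs.simple i, Subgroup.subset_closure ⟨i, hi, rfl⟩⟩ + 1) *
      (T ⟨cs.simple i, Subgroup.subset_closure ⟨i, hi, rfl⟩⟩ - algebraMap R carrier q) = 0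

attribute [instance] HeckeJ.ring HeckeJ.alg

/-- `(Mod, φ)` is (a realization of) the induced module `H^{J,a} = H ⊗_{H(W_J)} R^a`
together with `φ = φ^{J,a} : h ↦ h ⊗ 1^a`:  `φ` is surjective and its kernel is
the `R`-span of the elements `h (T_s - a)`, `s ∈ J`, which is exactly the kernel of
`h ↦ h ⊗ 1^a`. -/
def IsInduced {q : R} (Hk : Hecke cs R q) (J : Set B) (a : R)
    (Mod : Type*) [AddCommGroup Mod] [Module R Mod] (φ : Hk.carrier →ₗ[R] Mod) : Prop :=
  Function.Surjective φ ∧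
  LinearMap.ker φ = Submodule.span R
    {h : Hk.carrier | ∃ (g : Hk.carrier) (i : B), i ∈ J ∧
      h = g * (Hk.T (cs.simple i) - algebraMap R Hk.carrier a)}

/-- `C` is the parabolic Kazhdan–Lusztig basis element `C_w^{J,a}` of `H^{J,a}`:
`C = Σ_{y ∈ W^J, y ≤ w} P^{J,a}_{y,w} T_y^{J,a}` with `P^{J,a}_{w,w} = 1`,
`P^{J,a}_{y,w} ∈ ⊕_{i=0}^{ℓ(w)-ℓ(y)-1} R_i` for `y < w`, and `barJ C = q^{-ℓ(w)} C`,
where `b` is the basis `(T_y^{J,a})_{y ∈ W^J}` of `H^{J,a}` and `barJ` its bar involution.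
(The coefficient `P^{J,a}_{y,w}` of `C_w^{J,a}` is `b.repr C y`.) -/
def IsKLEltJ (K : KLRing R) {J : Set B} {Mod : Type*} [AddCommGroup Mod] [Module R Mod]
    (b : Module.Basis (minReps cs J) R Mod) (barJ : Mod →+ Mod)
    (w : minReps cs J) (C : Mod) : Prop :=
  b.repr C w = 1 ∧
  (∀ y : minReps cs J, b.repr C y ≠ 0 → bruhatLE cs y.1 w.1) ∧
  (∀ y : minReps cs J, bruhatLE cs y.1 w.1 → y ≠ w →
    b.repr C y ∈ K.gradeSum (cs.length w.1 - cs.length y.1)) ∧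
  barJ C = K.qinv ^ cs.length w.1 • C



section AuxBruhat

variable {cs : CoxeterSystem M W}

theorem bruhat_length_le {x y : W} (h : bruhatLE cs x y) :
    cs.length x ≤ cs.length y := by
  induction h with
  | refl => exact le_rfl
  | tail _ h ih => exact ih.trans (le_of_lt h.2)

theorem bruhat_length_lt {x y : W} (h : bruhatLE cs x y) (hne : x ≠ y) :
    cs.length x < cs.length y := by
  rcases Relation.ReflTransGen.cases_head h with rfl | ⟨c, hc, hcy⟩
  · exact absurd rfl hne
  · exact lt_of_lt_of_le hc.2 (bruhat_length_le hcy)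

theorem bruhat_antisymm {x y : W} (h1 : bruhatLE cs x y) (h2 : bruhatLE cs y x) : x = y := by
  by_contra hne
  exact absurd (bruhat_length_lt h1 hne) (not_lt.2 (bruhat_length_le h2))

end AuxBruhat

section AuxKLRing

open scoped DirectSum

/-- The additive equivalence `⨁ i, R_i ≃+ R` coming from the internal grading. -/
noncomputable def KLRing.dsEquiv (K : KLRing R) : (⨁ i, K.grade i) ≃+ R :=
  AddEquiv.ofBijective (DirectSum.coeAddMonoidHom K.grade) K.decomp

/-- The `k`-th homogeneous component of `r`. -/
noncomputable def KLRing.comp (K : KLRing R) (k : ℤ) (r : R) : R :=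
  (K.dsEquiv.symm r k : R)

theorem KLRing.dsEquiv_of (K : KLRing R) (j : ℤ) (x : K.grade j) :
    K.dsEquiv (DirectSum.of (fun i => K.grade i) j x) = x :=
  DirectSum.coeAddMonoidHom_of K.grade j x

theorem KLRing.comp_add (K : KLRing R) (k : ℤ) (r s : R) :
    K.comp k (r + s) = K.comp k r + K.comp k s := by
  unfold KLRing.comp
  rw [map_add, DirectSum.add_apply, AddSubgroup.coe_add]

theorem KLRing.comp_zero (K : KLRing R) (k : ℤ) : K.comp k 0 = 0 := by
  unfold KLRing.comp
  rw [map_zero, DirectSum.zero_apply, ZeroMemClass.coe_zero]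

theorem KLRing.comp_of_mem (K : KLRing R) {j : ℤ} {r : R} (h : r ∈ K.grade j) (k : ℤ) :
    K.comp k r = if k = j then r else 0 := by
  have he : K.dsEquiv.symm r = DirectSum.of (fun i => K.grade i) j ⟨r, h⟩ := by
    rw [AddEquiv.symm_apply_eq, K.dsEquiv_of]
  unfold KLRing.comp
  rw [he, DirectSum.of_apply]
  by_cases hk : j = k
  · subst hk; simp
  · rw [dif_neg hk, if_neg (Ne.symm hk), ZeroMemClass.coe_zero]

theorem KLRing.eq_zero_of_comp (K : KLRing R) {r : R} (h : ∀ k, K.comp k r = 0) : r = 0 := by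
  have h0 : K.dsEquiv.symm r = 0 := by
    refine DFinsupp.ext fun k => Subtype.ext ?_
    rw [DirectSum.zero_apply, ZeroMemClass.coe_zero]
    exact h k
  have := congrArg K.dsEquiv h0
  simpa using this

theorem KLRing.grade_le_gradeSum (K : KLRing R) {i n : ℕ} (h : i < n) :
    K.grade (i : ℤ) ≤ K.gradeSum n :=
  le_iSup₂ (f := fun (i : ℕ) (_ : i ∈ Finset.range n) => K.grade (i : ℤ)) i
    (Finset.mem_range.2 h)

theorem KLRing.gradeSum_mono (K : KLRing R) {m n : ℕ} (h : m ≤ n) :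
    K.gradeSum m ≤ K.gradeSum n :=
  biSup_mono fun i hi => Finset.mem_range.2 (lt_of_lt_of_le (Finset.mem_range.1 hi) h)

theorem KLRing.gradeSum_induction (K : KLRing R) {n : ℕ} {C : R → Prop} {r : R}
    (hr : r ∈ K.gradeSum n)
    (mem : ∀ i : ℕ, i < n → ∀ x ∈ K.grade (i : ℤ), C x)
    (zero : C 0) (add : ∀ x y, C x → C y → C (x + y)) : C r := by
  rw [KLRing.gradeSum, iSup_subtype'] at hr
  exact AddSubgroup.iSup_induction (C := C) _ hr
    (fun i x hx => mem i.1 (Finset.mem_range.1 i.2) x hx) zero add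

theorem KLRing.grade_zero_mul_mem (K : KLRing R) {r s : R} (hr : r ∈ K.grade 0) {n : ℕ}
    (hs : s ∈ K.gradeSum n) : r * s ∈ K.gradeSum n := by
  refine K.gradeSum_induction (C := fun s => r * s ∈ K.gradeSum n) hs
    (fun i hi x hx => ?_) ?_ (fun x y hx hy => ?_)
  · exact K.grade_le_gradeSum hi (by simpa using K.grade_mul 0 i r x hr hx)
  · simpa using zero_mem (K.gradeSum n)
  · simpa [mul_add] using add_mem hx hy

theorem KLRing.neg_one_pow_mem (K : KLRing R) (n : ℕ) : ((-1 : R)) ^ n ∈ K.grade 0 := by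
  induction n with
  | zero => simpa using K.one_mem
  | succ n ih => rw [pow_succ, mul_neg_one]; exact neg_mem ih

theorem KLRing.gradeSum_mul_mem (K : KLRing R) {r s : R} {m n : ℕ} (hm : 1 ≤ m) (hn : 1 ≤ n)
    (hr : r ∈ K.gradeSum m) (hs : s ∈ K.gradeSum n) : r * s ∈ K.gradeSum (m + n - 1) := by
  refine K.gradeSum_induction (C := fun r => r * s ∈ K.gradeSum (m + n - 1)) hr
    (fun i hi x hx => ?_) ?_ (fun x y hx hy => ?_)
  · refine K.gradeSum_induction (C := fun s => x * s ∈ K.gradeSum (m + n - 1)) hs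
      (fun j hj y hy => ?_) ?_ (fun a c ha hc => ?_)
    · have h1 := K.grade_mul i j x y hx hy
      have h2 : x * y ∈ K.grade ((i + j : ℕ) : ℤ) := by push_cast; exact h1
      exact K.grade_le_gradeSum (by omega) h2
    · simpa using zero_mem (K.gradeSum (m + n - 1))
    · simpa [mul_add] using add_mem ha hc
  · simpa using zero_mem (K.gradeSum (m + n - 1))
  · simpa [add_mul] using add_mem hx hy

theorem KLRing.conj_qinv (K : KLRing R) : K.conj K.qinv = K.q := by
  rw [← K.conj_q, K.conj_conj]

theorem KLRing.qinv_mem (K : KLRing R) : K.qinv ∈ K.grade (-2) := by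
  rw [← K.conj_q]; exact K.conj_grade 2 K.q K.q_mem

theorem KLRing.qinv_pow_mem (K : KLRing R) (n : ℕ) : K.qinv ^ n ∈ K.grade (-(2 * n)) := by
  induction n with
  | zero => simpa using K.one_mem
  | succ n ih =>
    have h := K.grade_mul _ _ _ _ ih K.qinv_mem
    rw [pow_succ]
    convert h using 2
    push_cast; ring

theorem KLRing.q_pow_mul_qinv_pow (K : KLRing R) (n : ℕ) : K.q ^ n * K.qinv ^ n = 1 := by
  rw [← mul_pow, K.q_qinv, one_pow]

theorem KLRing.comp_conj_eq_zero (K : KLRing R) {r : R} {m : ℕ} (hr : r ∈ K.gradeSum m)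
    (k : ℤ) (hk : ¬(1 - (m : ℤ) ≤ k ∧ k ≤ 0)) : K.comp k (K.conj r) = 0 := by
  refine K.gradeSum_induction (C := fun r => K.comp k (K.conj r) = 0) hr
    (fun i hi x hx => ?_) ?_ (fun x y hx hy => ?_)
  · have hcx := K.conj_grade i x hx
    show K.comp k (K.conj x) = 0
    rw [K.comp_of_mem hcx, if_neg]
    intro h
    exact hk ⟨by omega, by omega⟩
  · show K.comp k (K.conj (0 : R)) = 0
    rw [map_zero]; exact K.comp_zero k
  · show K.comp k (K.conj (x + y)) = 0
    rw [map_add, K.comp_add]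
    exact by rw [hx, hy, add_zero]

theorem KLRing.comp_qinv_pow_mul_eq_zero (K : KLRing R) {r : R} {m : ℕ} (hr : r ∈ K.gradeSum m)
    (k : ℤ) (hk : ¬(-(2 * (m : ℤ)) ≤ k ∧ k ≤ -(m : ℤ) - 1)) :
    K.comp k (K.qinv ^ m * r) = 0 := by
  refine K.gradeSum_induction (C := fun r => K.comp k (K.qinv ^ m * r) = 0) hr
    (fun i hi x hx => ?_) ?_ (fun x y hx hy => ?_)
  · have h := K.grade_mul _ _ _ _ (K.qinv_pow_mem m) hx
    show K.comp k (K.qinv ^ m * x) = 0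
    rw [K.comp_of_mem h, if_neg]
    intro hkk
    exact hk ⟨by omega, by omega⟩
  · show K.comp k (K.qinv ^ m * (0 : R)) = 0
    rw [mul_zero]; exact K.comp_zero k
  · show K.comp k (K.qinv ^ m * (x + y)) = 0
    rw [mul_add, K.comp_add]
    exact by rw [hx, hy, add_zero]

theorem KLRing.vanish (K : KLRing R) {r : R} {m : ℕ} (hm : 1 ≤ m) (hr : r ∈ K.gradeSum m)
    (heq : K.conj r = K.qinv ^ m * r) : r = 0 := by
  have hc : ∀ k, K.comp k (K.conj r) = 0 := by
    intro k
    by_cases h : 1 - (m : ℤ) ≤ k ∧ k ≤ 0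
    · rw [heq]
      exact K.comp_qinv_pow_mul_eq_zero hr k (by omega)
    · exact K.comp_conj_eq_zero hr k h
  have h0 : K.conj r = 0 := K.eq_zero_of_comp hc
  calc r = K.conj (K.conj r) := (K.conj_conj r).symm
  _ = K.conj 0 := by rw [h0]
  _ = 0 := map_zero _

end AuxKLRing

/-- if `D ∈ H^{J,a,*} = Hom_R(H^{J,a}, R)` satisfies
`D = Σ_{y ∈ W^J, y ≥ w} r_y S_y^{J,a}` with `r_w = 1` and
`r_y ∈ ⊕_{i=0}^{ℓ(y)-ℓ(w)-1} R_i` for `y > w` in `W^J`, and `conj D = q^{ℓ(w)} D`,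
then `D = D_w^{J,a}`, i.e. `⟨D, C_x^{J,a}⟩ = (-1)^{ℓ(w)} δ_{w,x}` for all `x ∈ W^J`.
Here the coefficient `r_y` is `(-1)^{ℓ(y)} ⟨D, T_y^{J,a}⟩` (since
`⟨S_y^{J,a}, T_x^{J,a}⟩ = (-1)^{ℓ(y)} δ_{y,x}`), and the bar involution of `H^{J,a,*}`
is given by `⟨conj D, k⟩ = conj ⟨D, conj k⟩`. -/
theorem statement16 (K : KLRing R) (J : Set B) (Hk : Hecke cs R K.q)
    (bar : Hk.carrier →+* Hk.carrier) (hbar : IsBar K Hk bar)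
    (a : R) (ha : a = K.q ∨ a = -1)
    (Mod : Type*) [AddCommGroup Mod] [Module R Mod]
    (φ : Hk.carrier →ₗ[R] Mod) (hInd : IsInduced Hk J a Mod φ)
    (b : Module.Basis (minReps cs J) R Mod) (hb : ∀ u : minReps cs J, b u = φ (Hk.T u.1))
    (barJ : Mod →+ Mod) (hbarJ : ∀ h : Hk.carrier, barJ (φ h) = φ (bar h))
    (CJ : minReps cs J → Mod) (hCJ : ∀ u : minReps cs J, IsKLEltJ K b barJ u (CJ u))
    (w : minReps cs J) (D : Mod →ₗ[R] R)
    (hsupp : ∀ y : minReps cs J, D (b y) ≠ 0 → bruhatLE cs w.1 y.1)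
    (hw : (-1 : R) ^ cs.length w.1 * D (b w) = 1)
    (hgr : ∀ y : minReps cs J, bruhatLE cs w.1 y.1 → y ≠ w →
      (-1 : R) ^ cs.length y.1 * D (b y) ∈ K.gradeSum (cs.length y.1 - cs.length w.1))
    (hdual : ∀ k : Mod, K.conj (D (barJ k)) = K.q ^ cs.length w.1 * D k) :
    ∀ x : minReps cs J, D (CJ x) = if x = w then (-1 : R) ^ cs.length w.1 else 0 := by
  classical
  have Dsum : ∀ v : Mod, D v = (b.repr v).sum fun y c => c * D (b y) := by
    intro v
    conv_lhs => rw [← b.linearCombination_repr v]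
    rw [Finsupp.linearCombination_apply, map_finsuppSum]
    simp only [map_smul, smul_eq_mul]
  have hsq : ∀ n : ℕ, ((-1 : R) ^ n) * ((-1 : R) ^ n) = 1 := by
    intro n; rw [← mul_pow]; norm_num
  have Dbw : D (b w) = (-1 : R) ^ cs.length w.1 := by
    calc D (b w) = ((-1 : R) ^ cs.length w.1 * (-1 : R) ^ cs.length w.1) * D (b w) := by
          rw [hsq, one_mul]
    _ = (-1 : R) ^ cs.length w.1 * ((-1 : R) ^ cs.length w.1 * D (b w)) := by ring
    _ = (-1 : R) ^ cs.length w.1 := by rw [hw, mul_one]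
  intro x
  obtain ⟨hx1, hx2, hx3, hx4⟩ := hCJ x
  by_cases hxw : x = w
  · subst hxw
    rw [if_pos rfl, Dsum, Finsupp.sum, Finset.sum_eq_single x]
    · rw [hx1, one_mul, Dbw]
    · intro y hy hyx
      by_cases hD : D (b y) = 0
      · rw [hD, mul_zero]
      · exact absurd (Subtype.ext (bruhat_antisymm
          (hx2 y (Finsupp.mem_support_iff.1 hy)) (hsupp y hD))) hyx
    · intro hx'
      rw [Finsupp.notMem_support_iff.1 hx', zero_mul]
  by_cases hwx : bruhatLE cs w.1 x.1
  swap
  · rw [if_neg hxw, Dsum, Finsupp.sum]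
    apply Finset.sum_eq_zero
    intro y hy
    by_cases hD : D (b y) = 0
    · rw [hD, mul_zero]
    · exact absurd (Relation.ReflTransGen.trans (hsupp y hD)
        (hx2 y (Finsupp.mem_support_iff.1 hy))) hwx
  -- main case : w < x
  have hlwx : cs.length w.1 < cs.length x.1 :=
    bruhat_length_lt hwx fun h => hxw (Subtype.ext h.symm)
  set m : ℕ := cs.length x.1 - cs.length w.1 with hm_def
  have hm : 1 ≤ m := by omega
  have hmemA : D (CJ x) ∈ K.gradeSum m := by
    rw [Dsum, Finsupp.sum]
    apply sum_mem
    intro y hy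
    have hyx : bruhatLE cs y.1 x.1 := hx2 y (Finsupp.mem_support_iff.1 hy)
    by_cases hD : D (b y) = 0
    · rw [hD, mul_zero]; exact zero_mem _
    have hwy : bruhatLE cs w.1 y.1 := hsupp y hD
    by_cases hyx' : y = x
    · rw [hyx', hx1, one_mul]
      have hgx := hgr x hwx hxw
      have hDx : D (b x) = (-1 : R) ^ cs.length x.1 * ((-1 : R) ^ cs.length x.1 * D (b x)) := by
        rw [← mul_assoc, hsq, one_mul]
      rw [hDx]
      exact K.grade_zero_mul_mem (K.neg_one_pow_mem _) hgx
    by_cases hyw : y = w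
    · rw [hyw, Dbw, mul_comm]
      exact K.grade_zero_mul_mem (K.neg_one_pow_mem _)
        (hx3 w hwx fun h => hxw h.symm)
    · have hP := hx3 y hyx hyx'
      have hDm := hgr y hwy hyw
      have hl1 : cs.length y.1 < cs.length x.1 :=
        bruhat_length_lt hyx fun h => hyx' (Subtype.ext h)
      have hl2 : cs.length w.1 < cs.length y.1 :=
        bruhat_length_lt hwy fun h => hyw (Subtype.ext h.symm)
      have h1 : (-1 : R) ^ cs.length y.1 * b.repr (CJ x) y ∈
          K.gradeSum (cs.length x.1 - cs.length y.1) :=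
        K.grade_zero_mul_mem (K.neg_one_pow_mem _) hP
      have h3 := K.gradeSum_mul_mem (by omega) (by omega) h1 hDm
      have heq : b.repr (CJ x) y * D (b y) =
          ((-1 : R) ^ cs.length y.1 * b.repr (CJ x) y) *
            ((-1 : R) ^ cs.length y.1 * D (b y)) := by
        calc b.repr (CJ x) y * D (b y)
            = ((-1 : R) ^ cs.length y.1 * (-1 : R) ^ cs.length y.1) *
              (b.repr (CJ x) y * D (b y)) := by rw [hsq, one_mul]
        _ = _ := by ring
      rw [heq]
      exact K.gradeSum_mono (by omega) h3
  have hB : K.conj (D (CJ x)) = K.qinv ^ m * D (CJ x) := by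
    have h1 := hdual (CJ x)
    rw [hx4, map_smul, smul_eq_mul, map_mul, map_pow, K.conj_qinv] at h1
    have h2 := congrArg (fun t => K.qinv ^ cs.length x.1 * t) h1
    rw [← mul_assoc, mul_comm (K.qinv ^ cs.length x.1) (K.q ^ cs.length x.1),
      K.q_pow_mul_qinv_pow, one_mul] at h2
    rw [h2]
    have hx' : cs.length x.1 = cs.length w.1 + m := by omega
    rw [hx', pow_add]
    calc K.qinv ^ cs.length w.1 * K.qinv ^ m * (K.q ^ cs.length w.1 * D (CJ x))
        = (K.q ^ cs.length w.1 * K.qinv ^ cs.length w.1) * (K.qinv ^ m * D (CJ x)) := by ring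
    _ = K.qinv ^ m * D (CJ x) := by rw [K.q_pow_mul_qinv_pow, one_mul]
  rw [if_neg hxw]
  exact K.vanish hm hmemA hB


end KLPaper
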